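/- arXiv:2105.03781 — 2 statements merged into one kernel-verified Lean document; each statement's English description precedes it below -/
import Mathlib

section
/- Let p be a probability measure on ℝ^d, let U be the uniform probability measure on [0, 2π], and fix x, x' ∈ ℝ^d. Then with respect to the product measure p ⊗ U on pairs (ω, b), the expectation of 2 cos(⟨ω, x⟩ + b) · cos(⟨ω, x'⟩ + b) equals ∫_{ℝ^d} cos⟨ω, x − x'⟩ dp(ω), i.e., the random Fourier feature product is an unbiased estimator of the kernel k(x, x') = ∫ cos⟨ω, x − x'⟩ dp(ω). -/
open MeasureTheory
open scoped RealInnerProductSpace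

lemma rff_aux_interval (c : ℝ) :
    ∫ b in (0:ℝ)..(2*Real.pi), Real.cos (c + 2*b) = 0 := by
  have h : (fun b : ℝ => Real.cos (c + 2*b)) = fun b => Real.cos (2*b + c) := by
    funext b; rw [add_comm]
  rw [h]
  have := intervalIntegral.integral_comp_mul_add (a := 0) (b := 2*Real.pi)
    (f := Real.cos) (two_ne_zero) c
  rw [this, integral_cos]
  have h1 : Real.sin (2 * (2*Real.pi) + c) = Real.sin (2 * 0 + c) := by
    have : 2 * (2*Real.pi) + c = c + 2*Real.pi + 2*Real.pi := by ring
    rw [this, Real.sin_add_two_pi, Real.sin_add_two_pi]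
    ring_nf
  rw [h1]; simp

/-- Unbiasedness of random Fourier features: for a probability measure `p` on ℝ^d and
the uniform measure `U` on `[0, 2π]`, the expectation of
`2 cos(⟨ω,x⟩+b) cos(⟨ω,x'⟩+b)` under `p ⊗ U` equals `∫ cos⟨ω, x-x'⟩ dp(ω)`. -/
theorem rff_unbiased (d : ℕ)
    (p : Measure (EuclideanSpace ℝ (Fin d))) [IsProbabilityMeasure p]
    (U : Measure ℝ)
    (hU : U = (ENNReal.ofReal (2 * Real.pi))⁻¹ • volume.restrict (Set.Icc 0 (2 * Real.pi)))
    (x x' : EuclideanSpace ℝ (Fin d)) :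
    ∫ ωb : EuclideanSpace ℝ (Fin d) × ℝ,
        2 * Real.cos (⟪ωb.1, x⟫ + ωb.2) * Real.cos (⟪ωb.1, x'⟫ + ωb.2) ∂(p.prod U) =
      ∫ ω, Real.cos ⟪ω, x - x'⟫ ∂p := by
  have hpi : (0:ℝ) < 2 * Real.pi := by positivity
  -- U is a probability measure
  have hUprob : IsProbabilityMeasure U := by
    constructor
    rw [hU]
    simp [Measure.restrict_apply, Real.volume_Icc]
    rw [ENNReal.inv_mul_cancel]
    · simp [ENNReal.ofReal_eq_zero]; linarith
    · exact ENNReal.mul_ne_top (by norm_num) ENNReal.ofReal_ne_top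
  -- zero average of the "fast" cosine
  have hUzero : ∀ c : ℝ, ∫ b, Real.cos (c + 2*b) ∂U = 0 := by
    intro c
    rw [hU, integral_smul_measure]
    have : ∫ b in Set.Icc 0 (2*Real.pi), Real.cos (c + 2*b) =
        ∫ b in (0:ℝ)..(2*Real.pi), Real.cos (c + 2*b) := by
      rw [intervalIntegral.integral_of_le (le_of_lt hpi),
        MeasureTheory.integral_Icc_eq_integral_Ioc]
    rw [this, rff_aux_interval]
    simp
  -- continuity / measurability
  have hcont1 : Continuous fun ωb : EuclideanSpace ℝ (Fin d) × ℝ =>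
      Real.cos ⟪ωb.1, x - x'⟫ :=
    Real.continuous_cos.comp (continuous_fst.inner continuous_const)
  have hcont2 : Continuous fun ωb : EuclideanSpace ℝ (Fin d) × ℝ =>
      Real.cos (⟪ωb.1, x + x'⟫ + 2*ωb.2) :=
    Real.continuous_cos.comp
      ((continuous_fst.inner continuous_const).add (continuous_const.mul continuous_snd))
  have hprodprob : IsProbabilityMeasure (p.prod U) := by infer_instance
  have hint : ∀ f : EuclideanSpace ℝ (Fin d) × ℝ → ℝ, Continuous f →
      (∀ z, |f z| ≤ 1) → Integrable f (p.prod U) := by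
    intro f hf hb
    exact (integrable_const (1:ℝ)).mono' hf.aestronglyMeasurable
      (Filter.Eventually.of_forall fun z => by simpa using hb z)
  have hint1 := hint _ hcont1 (fun z => Real.abs_cos_le_one _)
  have hint2 := hint _ hcont2 (fun z => Real.abs_cos_le_one _)
  -- pointwise product-to-sum identity
  have heq : ∀ ωb : EuclideanSpace ℝ (Fin d) × ℝ,
      2 * Real.cos (⟪ωb.1, x⟫ + ωb.2) * Real.cos (⟪ωb.1, x'⟫ + ωb.2) =
      Real.cos ⟪ωb.1, x - x'⟫ + Real.cos (⟪ωb.1, x + x'⟫ + 2*ωb.2) := by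
    rintro ⟨ω, b⟩
    have h1 : ⟪ω, x - x'⟫ = (⟪ω, x⟫ + b) - (⟪ω, x'⟫ + b) := by
      rw [inner_sub_right]; ring
    have h2 : ⟪ω, x + x'⟫ + 2*b = (⟪ω, x⟫ + b) + (⟪ω, x'⟫ + b) := by
      rw [inner_add_right]; ring
    rw [h1, h2]
    have key : ∀ A B : ℝ, 2 * Real.cos A * Real.cos B = Real.cos (A - B) + Real.cos (A + B) := by
      intro A B; rw [Real.cos_sub, Real.cos_add]; ring
    exact key _ _
  rw [integral_congr_ae (Filter.Eventually.of_forall heq),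
    integral_add hint1 hint2]
  have hterm1 : ∫ ωb : EuclideanSpace ℝ (Fin d) × ℝ,
      Real.cos ⟪ωb.1, x - x'⟫ ∂(p.prod U) = ∫ ω, Real.cos ⟪ω, x - x'⟫ ∂p := by
    rw [MeasureTheory.integral_prod _ hint1]
    simp
  have hterm2 : ∫ ωb : EuclideanSpace ℝ (Fin d) × ℝ,
      Real.cos (⟪ωb.1, x + x'⟫ + 2*ωb.2) ∂(p.prod U) = 0 := by
    rw [MeasureTheory.integral_prod _ hint2]
    simp only [hUzero]
    simp
  rw [hterm1, hterm2, add_zero]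
end

section
/- Let m ∈ ℕ and let s, t : ℝ^m → ℝ^m be differentiable functions. Define F : ℝ^m × ℝ^m → ℝ^m × ℝ^m by F(x₁, x₂) = (x₁, x₂ ⊙ exp(s(x₁)) + t(x₁)), with componentwise multiplication ⊙ and componentwise exp. Then F is differentiable at every point (x₁, x₂), and the determinant of its derivative satisfies det DF(x₁, x₂) = ∏_{j=1}^m exp(s_j(x₁)) = exp(Σ_{j=1}^m s_j(x₁)); in particular det DF(x₁, x₂) > 0 and log det DF(x₁, x₂) = Σ_{j=1}^m s_j(x₁). -/
open ContinuousLinearMap in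
/-- Derivative of an affine coupling layer. -/
noncomputable def couplingDeriv (m : ℕ) (A B : (Fin m → ℝ) →L[ℝ] (Fin m → ℝ))
    (e c : Fin m → ℝ) :
    ((Fin m → ℝ) × (Fin m → ℝ)) →L[ℝ] ((Fin m → ℝ) × (Fin m → ℝ)) :=
  (fst ℝ _ _).prod
    (pi fun j =>
      c j • e j • (proj j).comp (A.comp (fst ℝ _ _)) +
        e j • (proj (R := ℝ) (φ := fun _ : Fin m => ℝ) j).comp (snd ℝ _ _) +
        (proj j).comp (B.comp (fst ℝ _ _)))

open ContinuousLinearMap in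
lemma couplingDeriv_det (m : ℕ) (A B : (Fin m → ℝ) →L[ℝ] (Fin m → ℝ)) (e c : Fin m → ℝ) :
    (couplingDeriv m A B e c).det = ∏ j, e j := by
  classical
  set b : Module.Basis (Fin m ⊕ Fin m) ℝ ((Fin m → ℝ) × (Fin m → ℝ)) :=
    (Pi.basisFun ℝ (Fin m)).prod (Pi.basisFun ℝ (Fin m)) with hb
  have : (couplingDeriv m A B e c).det =
      ((LinearMap.toMatrix b b) (couplingDeriv m A B e c : _ →ₗ[ℝ] _)).det := by
    rw [LinearMap.det_toMatrix]
  rw [this]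
  have hmat : (LinearMap.toMatrix b b) (couplingDeriv m A B e c : _ →ₗ[ℝ] _) =
      Matrix.fromBlocks 1 0
        (Matrix.of fun i j => c i * (e i * A (Pi.single j 1) i) + B (Pi.single j 1) i)
        (Matrix.diagonal e) := by
    ext i k
    rw [LinearMap.toMatrix_apply]
    cases k with
    | inl k =>
      cases i with
      | inl i =>
        simp [hb, couplingDeriv, Module.Basis.prod_repr_inl, Pi.basisFun_repr, Matrix.one_apply, mul_assoc,
          Pi.single_apply, eq_comm]
      | inr i =>
        simp [hb, couplingDeriv, Module.Basis.prod_repr_inr, Pi.basisFun_repr]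
    | inr k =>
      cases i with
      | inl i =>
        simp [hb, couplingDeriv, Module.Basis.prod_repr_inl, Pi.basisFun_repr]
      | inr i =>
        simp [hb, couplingDeriv, Module.Basis.prod_repr_inr, Pi.basisFun_repr,
          Matrix.diagonal_apply, Pi.single_apply, eq_comm, mul_assoc]
  rw [hmat, Matrix.det_fromBlocks_zero₁₂, Matrix.det_one, Matrix.det_diagonal, one_mul]

open ContinuousLinearMap in
/-- The Jacobian determinant of an affine coupling layer equals
`∏ j exp(s_j(x₁)) = exp(∑ j s_j(x₁))`; in particular it is positive and its log is
`∑ j s_j(x₁)`. -/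
theorem affine_coupling_det (m : ℕ) (s t : (Fin m → ℝ) → (Fin m → ℝ))
    (hs : Differentiable ℝ s) (ht : Differentiable ℝ t)
    (F : (Fin m → ℝ) × (Fin m → ℝ) → (Fin m → ℝ) × (Fin m → ℝ))
    (hF : ∀ x₁ x₂ : Fin m → ℝ,
      F (x₁, x₂) = (x₁, fun j => x₂ j * Real.exp (s x₁ j) + t x₁ j))
    (x₁ x₂ : Fin m → ℝ) :
    DifferentiableAt ℝ F (x₁, x₂) ∧
    (fderiv ℝ F (x₁, x₂)).det = ∏ j, Real.exp (s x₁ j) ∧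
    (fderiv ℝ F (x₁, x₂)).det = Real.exp (∑ j, s x₁ j) ∧
    0 < (fderiv ℝ F (x₁, x₂)).det ∧
    Real.log ((fderiv ℝ F (x₁, x₂)).det) = ∑ j, s x₁ j := by
  have hFeq : F = fun p => (p.1, fun j => p.2 j * Real.exp (s p.1 j) + t p.1 j) := by
    funext p; obtain ⟨a, b⟩ := p; exact hF a b
  have hDF : HasFDerivAt F
      (couplingDeriv m (fderiv ℝ s x₁) (fderiv ℝ t x₁) (fun j => Real.exp (s x₁ j)) x₂)
      (x₁, x₂) := by
    rw [hFeq]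
    apply HasFDerivAt.prodMk (hasFDerivAt_fst)
    apply hasFDerivAt_pi.2
    intro j
    have h1 : HasFDerivAt (fun p : (Fin m → ℝ) × (Fin m → ℝ) => p.2 j)
        ((proj (R := ℝ) (φ := fun _ : Fin m => ℝ) j).comp (snd ℝ _ _)) (x₁, x₂) :=
      by have := (hasFDerivAt_apply (𝕜 := ℝ) j x₂).comp (x₁, x₂) (hasFDerivAt_snd (𝕜 := ℝ) (p := (x₁, x₂))); exact this
    have hsd : HasFDerivAt (fun p : (Fin m → ℝ) × (Fin m → ℝ) => s p.1 j)
        ((proj j).comp ((fderiv ℝ s x₁).comp (fst ℝ _ _))) (x₁, x₂) :=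
      by have := (hasFDerivAt_apply j (s (x₁, x₂).1)).comp (x₁, x₂) (((hs (x₁, x₂).1).hasFDerivAt).comp (x₁, x₂) (hasFDerivAt_fst (𝕜 := ℝ) (p := (x₁, x₂)))); exact this
    have h2 := hsd.exp
    have h3 : HasFDerivAt (fun p : (Fin m → ℝ) × (Fin m → ℝ) => t p.1 j)
        ((proj j).comp ((fderiv ℝ t x₁).comp (fst ℝ _ _))) (x₁, x₂) :=
      by have := (hasFDerivAt_apply j (t (x₁, x₂).1)).comp (x₁, x₂) (((ht (x₁, x₂).1).hasFDerivAt).comp (x₁, x₂) (hasFDerivAt_fst (𝕜 := ℝ) (p := (x₁, x₂)))); exact this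
    have h4 := (h1.mul h2).add h3
    convert h4 using 1
    rfl
  have hfd : fderiv ℝ F (x₁, x₂) =
      couplingDeriv m (fderiv ℝ s x₁) (fderiv ℝ t x₁) (fun j => Real.exp (s x₁ j)) x₂ :=
    hDF.fderiv
  have hdet : (fderiv ℝ F (x₁, x₂)).det = ∏ j, Real.exp (s x₁ j) := by
    rw [hfd, couplingDeriv_det]
  refine ⟨hDF.differentiableAt, hdet, ?_, ?_, ?_⟩
  · rw [hdet, Real.exp_sum]
  · rw [hdet]; positivity
  · rw [hdet, ← Real.exp_sum, Real.log_exp]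
end
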